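/- Γ₈ is isomorphic to the graph obtained from the complete bipartite graph K₃,₃ by subdividing once each of two non-adjacent (vertex-disjoint) edges; in particular, contracting the edges a₁v₁ and a₂v₂ of Γ₈ yields a graph isomorphic to K₃,₃, so K₃,₃ is a minor of Γ₈. -/
import Mathlib

/-- `H` is a minor of `G`: `H` can be obtained from a subgraph of `G` by contracting edges.
Equivalently (branch-set formulation): there is a family of nonempty, pairwise disjoint,
connected subsets of the vertices of `G`, indexed by the vertices of `H`, such that whenever
two vertices are adjacent in `H` there is an edge of `G` between the corresponding sets. -/
def IsMinor {W V : Type} (H : SimpleGraph W) (G : SimpleGraph V) : Prop :=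
  ∃ B : W → Set V,
    (∀ w, (B w).Nonempty) ∧
    (∀ w, (G.induce (B w)).Connected) ∧
    (∀ w₁ w₂, w₁ ≠ w₂ → Disjoint (B w₁) (B w₂)) ∧
    (∀ w₁ w₂, H.Adj w₁ w₂ → ∃ u ∈ B w₁, ∃ x ∈ B w₂, G.Adj u x)

/-- The complete bipartite graph `K₃,₃`. -/
def K33 : SimpleGraph (Fin 3 ⊕ Fin 3) := completeBipartiteGraph (Fin 3) (Fin 3)

/-- The graph obtained from `G` by subdividing the edge `uw` once: the edge `uw` is
deleted, and a new vertex `x` is added together with the edges `ux` and `xw`. -/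
def subdivide {V : Type} (G : SimpleGraph V) (u w : V) : SimpleGraph (V ⊕ Unit) :=
  SimpleGraph.fromEdgeSet
    ((Sym2.map Sum.inl '' (G.edgeSet \ {s(u, w)})) ∪
      {s(Sum.inl u, Sum.inr ()), s(Sum.inr (), Sum.inl w)})

/-- The vertices of the graph `Γ₈`. -/
inductive V8 : Type
  | v1 | v2 | a1 | a2 | a3 | b1 | b2 | b3
  deriving DecidableEq

open V8

/-- The graph `Γ₈`: the hexagonal cycle `a₁a₂a₃b₁b₂b₃a₁`, the chord `a₃b₃`,
and the four edges `a₁v₁`, `v₁b₁`, `a₂v₂`, `v₂b₂`. -/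
def Gamma8 : SimpleGraph V8 :=
  SimpleGraph.fromEdgeSet
    {s(a1, a2), s(a2, a3), s(a3, b1), s(b1, b2), s(b2, b3), s(b3, a1),
     s(a3, b3),
     s(a1, v1), s(v1, b1), s(a2, v2), s(v2, b2)}

/-- The vertices of the graph obtained from `Γ₈` by contracting the edges `a₁v₁` and
`a₂v₂` (the vertex `v₁` is identified with `a₁`, and `v₂` with `a₂`). -/
inductive V6 : Type
  | A1 | A2 | A3 | B1 | B2 | B3
  deriving DecidableEq

/-- The map identifying `v₁` with `a₁` and `v₂` with `a₂`. -/
def q8 : V8 → V6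
  | v1 => V6.A1
  | v2 => V6.A2
  | a1 => V6.A1
  | a2 => V6.A2
  | a3 => V6.A3
  | b1 => V6.B1
  | b2 => V6.B2
  | b3 => V6.B3

/-- The graph obtained from `Γ₈` by contracting the edges `a₁v₁` and `a₂v₂` (identifying
`v₁` with `a₁` and `v₂` with `a₂`, and deleting any resulting loops and parallel edges). -/
def Gamma8contr : SimpleGraph V6 :=
  SimpleGraph.fromRel (fun x y => ∃ u u' : V8, q8 u = x ∧ q8 u' = y ∧ Gamma8.Adj u u')

/-! ### Auxiliary material -/

section helpers
variable {V : Type} (G : SimpleGraph V)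

lemma induce_connected_single (x : V) : (G.induce {x}).Connected := by
  have : Nonempty ({x} : Set V) := ⟨⟨x, rfl⟩⟩
  refine ⟨fun a b => ?_⟩
  have : a = b := Subtype.ext (by rw [a.2, b.2])
  exact this ▸ SimpleGraph.Reachable.refl _

lemma induce_connected_pair {x y : V} (h : G.Adj x y) : (G.induce {x, y}).Connected := by
  have : Nonempty ({x, y} : Set V) := ⟨⟨x, Or.inl rfl⟩⟩
  refine ⟨fun a b => ?_⟩
  obtain ⟨za, ha⟩ := a
  obtain ⟨zb, hb⟩ := b
  rcases ha with rfl | rfl <;> rcases hb with rfl | rfl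
  · exact SimpleGraph.Reachable.refl _
  · exact SimpleGraph.Adj.reachable h
  · exact SimpleGraph.Adj.reachable h.symm
  · exact SimpleGraph.Reachable.refl _
end helpers

instance : Fintype V8 :=
  ⟨⟨[v1, v2, a1, a2, a3, b1, b2, b3], by decide⟩, fun x => by cases x <;> decide⟩

instance : Fintype V6 :=
  ⟨⟨[V6.A1, V6.A2, V6.A3, V6.B1, V6.B2, V6.B3], by decide⟩, fun x => by cases x <;> decide⟩

instance : DecidableRel K33.Adj := fun x y => by
  unfold K33 completeBipartiteGraph; exact inferInstanceAs (Decidable (_ ∨ _))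

instance : DecidableRel Gamma8.Adj := fun x y =>
  decidable_of_iff
    ((s(x,y) = s(a1, a2) ∨ s(x,y) = s(a2, a3) ∨ s(x,y) = s(a3, b1) ∨ s(x,y) = s(b1, b2) ∨
      s(x,y) = s(b2, b3) ∨ s(x,y) = s(b3, a1) ∨ s(x,y) = s(a3, b3) ∨ s(x,y) = s(a1, v1) ∨
      s(x,y) = s(v1, b1) ∨ s(x,y) = s(a2, v2) ∨ s(x,y) = s(v2, b2)) ∧ x ≠ y)
    (by rw [Gamma8, SimpleGraph.fromEdgeSet_adj]
        simp only [Set.mem_insert_iff, Set.mem_singleton_iff])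

instance subdivideDec {V : Type} [Fintype V] [DecidableEq V] (G : SimpleGraph V)
    [DecidableRel G.Adj] (u w : V) : DecidableRel (subdivide G u w).Adj := fun x y =>
  decidable_of_iff
    (((∃ a b : V, (G.Adj a b ∧ s(a, b) ≠ s(u, w)) ∧ s(Sum.inl a, Sum.inl b) = s(x, y)) ∨
        s(x, y) = s(Sum.inl u, Sum.inr ()) ∨ s(x, y) = s(Sum.inr (), Sum.inl w)) ∧ x ≠ y)
    (by
      rw [subdivide, SimpleGraph.fromEdgeSet_adj]
      simp only [Set.mem_union, Set.mem_image, Set.mem_diff, SimpleGraph.mem_edgeSet,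
        Set.mem_insert_iff, Set.mem_singleton_iff, Sym2.exists, Sym2.map_pair_eq])

instance : DecidableRel Gamma8contr.Adj := fun x y =>
  decidable_of_iff _ (SimpleGraph.fromRel_adj
    (fun x y => ∃ u u' : V8, q8 u = x ∧ q8 u' = y ∧ Gamma8.Adj u u') x y).symm

/-- The doubly subdivided `K₃,₃`. -/
abbrev Dbl := ((Fin 3 ⊕ Fin 3) ⊕ Unit) ⊕ Unit

def DG : SimpleGraph Dbl :=
  subdivide (subdivide K33 (Sum.inl 0) (Sum.inr 1)) (Sum.inl (Sum.inl 2)) (Sum.inl (Sum.inr 0))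

instance : DecidableRel DG.Adj := by unfold DG; infer_instance

def fDV : Dbl → V8
  | Sum.inl (Sum.inl (Sum.inl 0)) => a1
  | Sum.inl (Sum.inl (Sum.inl 1)) => a3
  | Sum.inl (Sum.inl (Sum.inl 2)) => b2
  | Sum.inl (Sum.inl (Sum.inr 0)) => a2
  | Sum.inl (Sum.inl (Sum.inr 1)) => b1
  | Sum.inl (Sum.inl (Sum.inr 2)) => b3
  | Sum.inl (Sum.inr ()) => v1
  | Sum.inr () => v2

def fVD : V8 → Dbl
  | a1 => Sum.inl (Sum.inl (Sum.inl 0))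
  | a3 => Sum.inl (Sum.inl (Sum.inl 1))
  | b2 => Sum.inl (Sum.inl (Sum.inl 2))
  | a2 => Sum.inl (Sum.inl (Sum.inr 0))
  | b1 => Sum.inl (Sum.inl (Sum.inr 1))
  | b3 => Sum.inl (Sum.inl (Sum.inr 2))
  | v1 => Sum.inl (Sum.inr ())
  | v2 => Sum.inr ()

def eDV : Dbl ≃ V8 := ⟨fDV, fVD, by decide, by decide⟩

lemma isoDV_rel : ∀ a b : Dbl, Gamma8.Adj (eDV a) (eDV b) ↔ DG.Adj a b := by decide

def isoDV : DG ≃g Gamma8 := ⟨eDV, isoDV_rel _ _⟩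

def fCK : V6 → Fin 3 ⊕ Fin 3
  | V6.A1 => Sum.inl 0
  | V6.A3 => Sum.inl 1
  | V6.B2 => Sum.inl 2
  | V6.A2 => Sum.inr 0
  | V6.B1 => Sum.inr 1
  | V6.B3 => Sum.inr 2

def fKC : Fin 3 ⊕ Fin 3 → V6
  | Sum.inl 0 => V6.A1
  | Sum.inl 1 => V6.A3
  | Sum.inl 2 => V6.B2
  | Sum.inr 0 => V6.A2
  | Sum.inr 1 => V6.B1
  | Sum.inr 2 => V6.B3

def eCK : V6 ≃ (Fin 3 ⊕ Fin 3) := ⟨fCK, fKC, by decide, by decide⟩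

lemma isoCK_rel : ∀ a b : V6, K33.Adj (eCK a) (eCK b) ↔ Gamma8contr.Adj a b := by decide

def isoCK : Gamma8contr ≃g K33 := ⟨eCK, isoCK_rel _ _⟩

/-- The branch sets. -/
def BB : Fin 3 ⊕ Fin 3 → Finset V8
  | Sum.inl 0 => {a1, v1}
  | Sum.inl 1 => {a3}
  | Sum.inl 2 => {b2}
  | Sum.inr 0 => {a2, v2}
  | Sum.inr 1 => {b1}
  | Sum.inr 2 => {b3}

lemma K33_minor : IsMinor K33 Gamma8 := by
  have hd : ∀ w₁ w₂ : Fin 3 ⊕ Fin 3, w₁ = w₂ ∨ Disjoint (BB w₁) (BB w₂) := by decide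
  refine ⟨fun w => ↑(BB w), fun w => ?_, fun w => ?_, fun w₁ w₂ h => ?_, ?_⟩
  · rw [Finset.coe_nonempty]
    rcases w with i | i <;> fin_cases i <;> decide
  · rcases w with i | i <;> fin_cases i
    · show (Gamma8.induce (↑({a1, v1} : Finset V8))).Connected
      rw [Finset.coe_insert, Finset.coe_singleton]
      exact induce_connected_pair Gamma8 (by decide)
    · show (Gamma8.induce (↑({a3} : Finset V8))).Connected
      rw [Finset.coe_singleton]
      exact induce_connected_single Gamma8 _
    · show (Gamma8.induce (↑({b2} : Finset V8))).Connected
      rw [Finset.coe_singleton]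
      exact induce_connected_single Gamma8 _
    · show (Gamma8.induce (↑({a2, v2} : Finset V8))).Connected
      rw [Finset.coe_insert, Finset.coe_singleton]
      exact induce_connected_pair Gamma8 (by decide)
    · show (Gamma8.induce (↑({b1} : Finset V8))).Connected
      rw [Finset.coe_singleton]
      exact induce_connected_single Gamma8 _
    · show (Gamma8.induce (↑({b3} : Finset V8))).Connected
      rw [Finset.coe_singleton]
      exact induce_connected_single Gamma8 _
  · rw [Finset.disjoint_coe]
    rcases hd w₁ w₂ with rfl | hdd
    · exact absurd rfl h
    · exact hdd
  · have key : ∀ w₁ w₂, K33.Adj w₁ w₂ → ∃ u ∈ BB w₁, ∃ x ∈ BB w₂, Gamma8.Adj u x := by decide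
    intro w₁ w₂ h
    obtain ⟨u, hu, x, hx, hadj⟩ := key w₁ w₂ h
    exact ⟨u, Finset.mem_coe.2 hu, x, Finset.mem_coe.2 hx, hadj⟩

/-- `Γ₈` is isomorphic to the graph obtained from `K₃,₃` by subdividing once each of two
non-adjacent (vertex-disjoint) edges; in particular, contracting the edges `a₁v₁` and
`a₂v₂` of `Γ₈` yields a graph isomorphic to `K₃,₃`, so `K₃,₃` is a minor of `Γ₈`. -/
theorem Gamma8_is_double_subdivision_of_K33 :
    (∃ u w u' w' : Fin 3 ⊕ Fin 3, K33.Adj u w ∧ K33.Adj u' w' ∧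
      u ≠ u' ∧ u ≠ w' ∧ w ≠ u' ∧ w ≠ w' ∧
      Nonempty ((subdivide (subdivide K33 u w) (Sum.inl u') (Sum.inl w')) ≃g Gamma8)) ∧
    Nonempty (Gamma8contr ≃g K33) ∧
    IsMinor K33 Gamma8 := by
  refine ⟨⟨Sum.inl 0, Sum.inr 1, Sum.inl 2, Sum.inr 0, by decide, by decide,
    by decide, by decide, by decide, by decide, ⟨isoDV⟩⟩, ⟨isoCK⟩, K33_minor⟩
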